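/- Differentiability of the Hamiltonian in the state variable (envelope theorem) and growth of its x-derivative: let q' ∈ (1,∞), q = q'/(q'−1), C₀ > 0, Λ ≥ 0, and let L : ℝ^d×ℝ^d → ℝ, (x,α) ↦ L(x,α), be differentiable with L and its derivatives L_x, L_α continuous, such that for every (x,p) the function α ↦ −p·α − L(x,α) attains its supremum at a unique point α*(x,p), and such that for all (x,α): C₀⁻¹|α|^{q'} − C₀(1+Λ^{q'}) ≤ L(x,α), |L(x,α)| ≤ C₀(1+|α|^{q'}+Λ^{q'}), and |L_x(x,α)| ≤ C₀(1+|α|^{q'}+Λ^{q'}). Then H(x,p) := sup_{α∈ℝ^d}(−p·α − L(x,α)) is differentiable with respect to x, with ∇_x H(x,p) = −L_x(x, α*(x,p)), and there is a constant C̃₀ > 0 depending only on C₀ and q such that |∇_x H(x,p)| ≤ C̃₀(1+|p|^{q}+Λ^{q'}) for all (x,p). -/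

import Mathlib

open MeasureTheory Real Set
open scoped InnerProductSpace

noncomputable section

/-- The Euclidean state space `ℝ^d`. -/
abbrev E (d : ℕ) : Type := EuclideanSpace ℝ (Fin d)

/-- The derivative of a function of `(x,α)` with partial gradients `vx` (in `x`) and
`vα` (in `α`), as a continuous linear map on the product space. -/
def pairD (d : ℕ) (vx vα : E d) : (E d × E d) →L[ℝ] ℝ :=
  ((innerSL ℝ vx).comp (ContinuousLinearMap.fst ℝ (E d) (E d))) +
  ((innerSL ℝ vα).comp (ContinuousLinearMap.snd ℝ (E d) (E d)))

set_option maxHeartbeats 1000000 in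
/-- Differentiability of the Hamiltonian in the state variable (envelope
theorem) and growth of its `x`-derivative: let `q' ∈ (1,∞)`, `q = q'/(q'−1)`, `C₀ > 0`.
There is a constant `C̃₀ > 0` depending only on `C₀` and `q` such that: for every `Λ ≥ 0` and
every `L : ℝ^d×ℝ^d → ℝ` differentiable (with derivatives `L_x`, `L_α`), with `L, L_x, L_α`
continuous, such that for every `(x,p)` the map `α ↦ −p·α − L(x,α)` attains its supremum at
the unique point `α*(x,p)`, and with the stated coercivity/growth bounds, the Hamiltonian
`H(x,p) = sup_α(−p·α − L(x,α))` is differentiable in `x` with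
`∇_x H(x,p) = −L_x(x,α*(x,p))` and `|∇_x H(x,p)| ≤ C̃₀(1+|p|^q+Λ^{q'})`. -/
theorem hamiltonian_x_derivative
    (q' q C0 : ℝ) (hq' : 1 < q') (hq : q = q' / (q' - 1)) (hC0 : 0 < C0) :
    ∃ Ct : ℝ, 0 < Ct ∧
      ∀ (d : ℕ), 1 ≤ d → ∀ (Λ : ℝ), 0 ≤ Λ →
      ∀ (L : E d → E d → ℝ) (Lx Lα : E d → E d → E d) (astar : E d → E d → E d),
        (∀ x α : E d, HasFDerivAt (fun z : E d × E d => L z.1 z.2)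
            (pairD d (Lx x α) (Lα x α)) (x, α)) →
        Continuous (fun z : E d × E d => (L z.1 z.2, Lx z.1 z.2, Lα z.1 z.2)) →
        (∀ x p : E d,
          (∀ β : E d, -⟪p, β⟫_ℝ - L x β ≤ -⟪p, astar x p⟫_ℝ - L x (astar x p)) ∧
          (∀ α : E d, (∀ β : E d, -⟪p, β⟫_ℝ - L x β ≤ -⟪p, α⟫_ℝ - L x α) → α = astar x p)) →
        (∀ x α : E d, C0⁻¹ * ‖α‖ ^ q' - C0 * (1 + Λ ^ q') ≤ L x α) →
        (∀ x α : E d, |L x α| ≤ C0 * (1 + ‖α‖ ^ q' + Λ ^ q')) →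
        (∀ x α : E d, ‖Lx x α‖ ≤ C0 * (1 + ‖α‖ ^ q' + Λ ^ q')) →
        ∀ x p : E d,
          HasGradientAt (fun y : E d => ⨆ α : E d, (-⟪p, α⟫_ℝ - L y α))
            (-(Lx x (astar x p))) x ∧
          ‖-(Lx x (astar x p))‖ ≤ Ct * (1 + ‖p‖ ^ q + Λ ^ q') := by
  have hq'0 : (0:ℝ) < q' := lt_trans zero_lt_one hq'
  have hcj : q'.HolderConjugate q := (Real.holderConjugate_iff_eq_conjExponent hq').2 hq
  have hq1 : 1 < q := hcj.symm.lt
  have hq0 : (0:ℝ) < q := lt_trans zero_lt_one hq1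
  have hG0 : (0:ℝ) < (2*C0) ^ (q/q') := Real.rpow_pos_of_pos (by linarith) _
  set K : ℝ := 4*C0^2 + 2*C0*(2*C0)^(q/q') with hKdef
  have hKpos : 0 < K := by positivity
  refine ⟨C0 * (1 + K), by positivity, ?_⟩
  intro d hd Λ hΛ L Lx Lα astar hdiff hcont hmax hcoer hLb hLxb x p
  have hΛ0 : 0 ≤ Λ ^ q' := Real.rpow_nonneg hΛ _
  have hP0 : 0 ≤ ‖p‖ ^ q := Real.rpow_nonneg (norm_nonneg p) _
  have hLc : Continuous (fun z : E d × E d => L z.1 z.2) := hcont.fst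
  have hLxc : Continuous (fun z : E d × E d => Lx z.1 z.2) := hcont.snd.fst
  -- uniform bound on the maximizers
  have habound : ∀ y : E d, ‖astar y p‖ ^ q' ≤ K * (1 + ‖p‖ ^ q + Λ ^ q') := by
    intro y
    set a := astar y p with ha
    have hA0 : (0:ℝ) ≤ ‖a‖ := norm_nonneg _
    have hAq0 : (0:ℝ) ≤ ‖a‖ ^ q' := Real.rpow_nonneg hA0 _
    have hL0 : |L y 0| ≤ C0 * (1 + Λ ^ q') := by
      have h := hLb y 0
      rw [norm_zero, Real.zero_rpow (ne_of_gt hq'0)] at h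
      linarith [h]
    have h0 : -⟪p, (0:E d)⟫_ℝ - L y 0 ≤ -⟪p, a⟫_ℝ - L y a := (hmax y p).1 0
    have h1 : ⟪p, a⟫_ℝ + L y a ≤ C0 * (1 + Λ ^ q') := by
      rw [inner_zero_right] at h0
      have := le_abs_self (L y 0)
      linarith
    have h2 : C0⁻¹ * ‖a‖ ^ q' - C0 * (1 + Λ ^ q') ≤ L y a := hcoer y a
    have h3 : -⟪p, a⟫_ℝ ≤ ‖p‖ * ‖a‖ := by
      have := abs_real_inner_le_norm p a
      have := neg_abs_le ⟪p, a⟫_ℝ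
      linarith
    -- Young's inequality with parameter
    set lam : ℝ := (2*C0) ^ (1/q') with hlamdef
    have hlam0 : 0 < lam := Real.rpow_pos_of_pos (by linarith) _
    have hyoung := Real.young_inequality_of_nonneg (a := lam * ‖p‖) (b := ‖a‖ / lam)
      (by positivity) (by positivity) hcj.symm
    have hprod : lam * ‖p‖ * (‖a‖ / lam) = ‖p‖ * ‖a‖ := by
      field_simp
    have hlamq : lam ^ q = (2*C0) ^ (q/q') := by
      rw [hlamdef, ← Real.rpow_mul (by linarith)]
      congr 1
      field_simp
    have hlamq' : lam ^ q' = 2*C0 := by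
      rw [hlamdef, ← Real.rpow_mul (by linarith), one_div, inv_mul_cancel₀ (ne_of_gt hq'0),
        Real.rpow_one]
    have hmulr : (lam * ‖p‖) ^ q = (2*C0)^(q/q') * ‖p‖ ^ q := by
      rw [Real.mul_rpow hlam0.le (norm_nonneg p), hlamq]
    have hdivr : (‖a‖ / lam) ^ q' = ‖a‖ ^ q' / (2*C0) := by
      rw [Real.div_rpow hA0 hlam0.le, hlamq']
    rw [hprod, hmulr, hdivr] at hyoung
    have hy1 : (2*C0)^(q/q') * ‖p‖ ^ q / q ≤ (2*C0)^(q/q') * ‖p‖ ^ q := by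
      apply div_le_self (by positivity) hq1.le
    have hy2 : ‖a‖ ^ q' / (2*C0) / q' ≤ ‖a‖ ^ q' / (2*C0) := by
      apply div_le_self (by positivity) hq'.le
    have hfin : ‖p‖ * ‖a‖ ≤ (2*C0)^(q/q') * ‖p‖ ^ q + ‖a‖ ^ q' / (2*C0) := by linarith
    -- combine
    have hC0inv : C0⁻¹ * ‖a‖ ^ q' ≤ 2*C0*(1+Λ^q') + (2*C0)^(q/q') * ‖p‖ ^ q
        + ‖a‖ ^ q' / (2*C0) := by linarith
    have hhalf : ‖a‖ ^ q' / (2*C0) ≤ 2*C0*(1+Λ^q') + (2*C0)^(q/q') * ‖p‖ ^ q := by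
      have e1 : C0⁻¹ * ‖a‖ ^ q' - ‖a‖ ^ q' / (2*C0) = ‖a‖ ^ q' / (2*C0) := by
        field_simp; ring
      linarith
    have := (div_le_iff₀ (by linarith : (0:ℝ) < 2*C0)).1 hhalf
    rw [hKdef]
    nlinarith [mul_nonneg hΛ0 hG0.le, mul_nonneg (mul_nonneg hC0.le hC0.le) hΛ0,
      mul_nonneg hP0 hC0.le, mul_nonneg (mul_nonneg hC0.le hG0.le) hP0]
  -- the norm bound
  have hCt : ‖Lx x (astar x p)‖ ≤ C0 * (1 + K) * (1 + ‖p‖ ^ q + Λ ^ q') := by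
    have h1 := hLxb x (astar x p)
    have h2 := habound x
    nlinarith [mul_nonneg hKpos.le hP0, mul_nonneg hKpos.le hΛ0, mul_nonneg hC0.le hΛ0,
      mul_nonneg hC0.le hP0]
  -- uniform radius bound
  set r : ℝ := max 1 (K * (1 + ‖p‖ ^ q + Λ ^ q')) with hrdef
  have hr : ∀ y : E d, ‖astar y p‖ ≤ r := by
    intro y
    rcases le_or_gt ‖astar y p‖ 1 with h | h
    · exact le_trans h (le_max_left _ _)
    · refine le_trans ?_ (le_max_right _ _)
      calc ‖astar y p‖ = ‖astar y p‖ ^ (1:ℝ) := (Real.rpow_one _).symm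
        _ ≤ ‖astar y p‖ ^ q' := Real.rpow_le_rpow_of_exponent_le h.le hq'.le
        _ ≤ _ := habound y
  -- continuity of the maximizer at x
  have hacont : Filter.Tendsto (fun y => astar y p) (nhds x) (nhds (astar x p)) := by
    apply Filter.tendsto_of_subseq_tendsto
    intro ns hns
    have hmem : ∀ n, astar (ns n) p ∈ Metric.closedBall (0 : E d) r := by
      intro n
      rw [Metric.mem_closedBall, dist_zero_right]
      exact hr (ns n)
    obtain ⟨β, hβmem, φ, hφmono, hφt⟩ :=
      (isCompact_closedBall (0 : E d) r).tendsto_subseq hmem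
    refine ⟨φ, ?_⟩
    have hnsφ : Filter.Tendsto (fun n => ns (φ n)) Filter.atTop (nhds x) :=
      hns.comp hφmono.tendsto_atTop
    have hβeq : β = astar x p := by
      apply (hmax x p).2
      intro β'
      have hle : ∀ n, -⟪p, β'⟫_ℝ - L (ns (φ n)) β' ≤
          -⟪p, astar (ns (φ n)) p⟫_ℝ - L (ns (φ n)) (astar (ns (φ n)) p) :=
        fun n => (hmax (ns (φ n)) p).1 β'
      have hφt' : Filter.Tendsto (fun n => astar (ns (φ n)) p) Filter.atTop (nhds β) := hφt
      have ht1 : Filter.Tendsto (fun n => -⟪p, β'⟫_ℝ - L (ns (φ n)) β') Filter.atTop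
          (nhds (-⟪p, β'⟫_ℝ - L x β')) := by
        have hz : Filter.Tendsto (fun n => ((ns (φ n), β') : E d × E d)) Filter.atTop
            (nhds (x, β')) := hnsφ.prodMk_nhds tendsto_const_nhds
        exact tendsto_const_nhds.sub ((hLc.tendsto (x, β')).comp hz)
      have ht2 : Filter.Tendsto
          (fun n => -⟪p, astar (ns (φ n)) p⟫_ℝ - L (ns (φ n)) (astar (ns (φ n)) p))
          Filter.atTop (nhds (-⟪p, β⟫_ℝ - L x β)) := by
        have hz : Filter.Tendsto (fun n => ((ns (φ n), astar (ns (φ n)) p) : E d × E d))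
            Filter.atTop (nhds (x, β)) := hnsφ.prodMk_nhds hφt'
        exact ((tendsto_const_nhds.inner hφt').neg).sub ((hLc.tendsto (x, β)).comp hz)
      exact le_of_tendsto_of_tendsto' ht1 ht2 hle
    rw [← hβeq]
    exact hφt
  -- partial derivative in the first variable
  have hLder : ∀ (y α : E d), HasFDerivAt (fun y' => L y' α) (innerSL ℝ (Lx y α)) y := by
    intro y α
    have h1 : HasFDerivAt (fun y' : E d => ((y', α) : E d × E d))
        ((ContinuousLinearMap.id ℝ (E d)).prod 0) y :=
      (hasFDerivAt_id y).prodMk (hasFDerivAt_const α y)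
    have h2 := (hdiff y α).comp y h1
    have h3 : (pairD d (Lx y α) (Lα y α)).comp ((ContinuousLinearMap.id ℝ (E d)).prod 0)
        = innerSL ℝ (Lx y α) := by
      ext w
      simp [pairD]
    rw [h3] at h2
    exact h2
  -- value of the supremum
  have hbdd : ∀ y : E d, BddAbove (Set.range (fun α : E d => -⟪p, α⟫_ℝ - L y α)) := by
    intro y
    refine ⟨-⟪p, astar y p⟫_ℝ - L y (astar y p), ?_⟩
    rintro _ ⟨β, rfl⟩
    exact (hmax y p).1 β
  have Hval : ∀ y : E d, (⨆ α : E d, (-⟪p, α⟫_ℝ - L y α))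
      = -⟪p, astar y p⟫_ℝ - L y (astar y p) := by
    intro y
    exact le_antisymm (ciSup_le (hmax y p).1) (le_ciSup (hbdd y) (astar y p))
  constructor
  · -- HasGradientAt
    rw [hasGradientAt_iff_hasFDerivAt]
    apply HasFDerivAt.of_isLittleO
    rw [Asymptotics.isLittleO_iff]
    intro c hc
    have ev1 := Asymptotics.isLittleO_iff.1 (hLder x (astar x p)).isLittleO hc
    obtain ⟨δ₁, hδ₁, hδ⟩ :=
      Metric.continuousAt_iff.1 (hLxc.continuousAt (x := (x, astar x p))) c hc
    have ev2 : ∀ᶠ y in nhds x, dist (astar y p) (astar x p) < δ₁/2 := by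
      have := hacont (Metric.ball_mem_nhds (astar x p) (half_pos hδ₁))
      exact this
    have ev3 : ∀ᶠ y in nhds x, dist y x < δ₁/2 :=
      Filter.eventually_of_mem (Metric.ball_mem_nhds x (half_pos hδ₁)) (fun y hy => hy)
    filter_upwards [ev1, ev2, ev3] with y h1 h2 h3
    set a := astar x p with hadef
    set ay := astar y p with haydef
    set w := Lx x a with hwdef
    -- mean value bound for the upper estimate
    have hmvt : ‖L y ay - L x ay - (innerSL ℝ w) (y - x)‖ ≤ c * ‖y - x‖ := by
      apply Convex.norm_image_sub_le_of_norm_hasFDerivWithin_le'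
        (f' := fun z => innerSL ℝ (Lx z ay))
        (fun z hz => (hLder z ay).hasFDerivWithinAt) ?_ (convex_segment x y)
        (left_mem_segment ℝ x y) (right_mem_segment ℝ x y)
      intro z hz
      have hzx : dist z x ≤ dist y x := by
        obtain ⟨t₁, t₂, ht₁, ht₂, hsum, rfl⟩ := hz
        have : t₁ • x + t₂ • y - x = t₂ • (y - x) := by
          rw [smul_sub]
          have ht : t₁ = 1 - t₂ := by linarith
          rw [ht, sub_smul, one_smul]
          abel
        rw [dist_eq_norm, this, norm_smul, dist_eq_norm]
        have : ‖y - x‖ = ‖y - x‖ := rfl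
        calc ‖t₂‖ * ‖y - x‖ ≤ 1 * ‖y - x‖ := by
              apply mul_le_mul_of_nonneg_right _ (norm_nonneg _)
              rw [Real.norm_eq_abs, abs_of_nonneg ht₂]; linarith
          _ = ‖y - x‖ := one_mul _
      have hdistz : dist (z, ay) ((x, a) : E d × E d) < δ₁ := by
        rw [Prod.dist_eq]
        apply max_lt
        · exact lt_of_le_of_lt hzx (by linarith)
        · exact lt_of_lt_of_le h2 (by linarith)
      have := hδ hdistz
      have heq : innerSL ℝ (Lx z ay) - innerSL ℝ w = innerSL ℝ (Lx z ay - w) := by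
        rw [map_sub]
      rw [heq, innerSL_apply_norm, ← dist_eq_norm]
      exact this.le
    -- value identities and squeeze
    have hHy : (⨆ α : E d, (-⟪p, α⟫_ℝ - L y α)) = -⟪p, ay⟫_ℝ - L y ay := Hval y
    have hHx : (⨆ α : E d, (-⟪p, α⟫_ℝ - L x α)) = -⟪p, a⟫_ℝ - L x a := Hval x
    have hlow : -⟪p, a⟫_ℝ - L y a ≤ -⟪p, ay⟫_ℝ - L y ay := (hmax y p).1 a
    have hup : -⟪p, ay⟫_ℝ - L x ay ≤ -⟪p, a⟫_ℝ - L x a := (hmax x p).1 ay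
    have htd : ((InnerProductSpace.toDual ℝ (E d)) (-w)) (y - x)
        = -⟪w, y - x⟫_ℝ := by
      rw [InnerProductSpace.toDual_apply_apply, inner_neg_left]
    have hinn : (innerSL ℝ w) (y - x) = ⟪w, y - x⟫_ℝ := rfl
    rw [hinn] at hmvt
    rw [Real.norm_eq_abs] at h1 ⊢
    rw [hinn] at h1
    rw [htd, hHy, hHx]
    have hb1 := abs_le.1 h1
    have hmvt' : |L y ay - L x ay - ⟪w, y - x⟫_ℝ| ≤ c * ‖y - x‖ := by
      rw [← Real.norm_eq_abs]; exact hmvt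
    have hb2 := abs_le.1 hmvt'
    rw [abs_le]
    constructor
    · -- lower bound
      have : L x a - L y a + ⟪w, y - x⟫_ℝ ≥ -(c * ‖y - x‖) := by
        have := hb1.2; linarith
      linarith
    · -- upper bound
      have : L x ay - L y ay + ⟪w, y - x⟫_ℝ ≤ c * ‖y - x‖ := by
        have := hb2.1; linarith
      linarith
  · rw [norm_neg]
    exact hCt
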